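/- Density increment from sparse rows: Let W ⊆ 𝔽₂ⁿ be a linear subspace, let X, Y, D ⊆ W be nonempty subsets with densities δ_X = |X|/|W|, δ_Y = |Y|/|W|, δ_D = |D|/|W|, and let A ⊆ S(X, Y, D) with |A| = α·δ_X·δ_Y·δ_D·|W|². Let ε̃ ∈ (0, 1) and ε_L ∈ (0, 1/2), and define L := {y ∈ Y : |{x ∈ W : (x, y) ∈ A}| < (1−ε̃)·α·δ_X·δ_D·|W|}. If |L| ≥ ε_L·|Y|, then there exists a subset Y' ⊆ Y with |Y'| ≥ |Y|/2 such that |A ∩ S(X, Y', D)| ≥ (1 + ε̃·ε_L/2)·α·δ_X·(|Y'|/|W|)·δ_D·|W|². -/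

import Mathlib

/-- The container set `S(X, Y, D)` (Section 5.1 of the paper). -/
def Container (n : ℕ) (X Y D : Set (Fin n → ZMod 2)) :
    Set ((Fin n → ZMod 2) × (Fin n → ZMod 2)) :=
  {p | p.1 ∈ X ∧ p.2 ∈ Y ∧ p.1 + p.2 ∈ D}

private lemma card_eq_toFinset_card' {β : Type} [Fintype β] (s : Set β) [Fintype ↥s] :
    Nat.card ↥s = s.toFinset.card := by
  rw [Nat.card_coe_set_eq, Set.ncard_eq_toFinset_card']

set_option maxHeartbeats 2000000 in
/-- Density increment from sparse rows (Lemma 5.10 of the paper): if many rows of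
`A` are sparse, then removing them yields a density increment. -/
theorem sparse_rows_density_increment
    (n : ℕ) (W : Submodule (ZMod 2) (Fin n → ZMod 2))
    (X Y D : Set (Fin n → ZMod 2))
    (A : Set ((Fin n → ZMod 2) × (Fin n → ZMod 2)))
    (δX δY δD α εt εL : ℝ)
    (hXne : X.Nonempty) (hYne : Y.Nonempty) (hDne : D.Nonempty)
    (hXW : X ⊆ (W : Set (Fin n → ZMod 2))) (hYW : Y ⊆ (W : Set (Fin n → ZMod 2)))
    (hDW : D ⊆ (W : Set (Fin n → ZMod 2)))
    (hA : A ⊆ Container n X Y D)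
    (hδX : δX = (Nat.card ↥X : ℝ) / (Nat.card ↥W : ℝ))
    (hδY : δY = (Nat.card ↥Y : ℝ) / (Nat.card ↥W : ℝ))
    (hδD : δD = (Nat.card ↥D : ℝ) / (Nat.card ↥W : ℝ))
    (hα : (Nat.card ↥A : ℝ) = α * δX * δY * δD * (Nat.card ↥W : ℝ) ^ 2)
    (hεt : εt ∈ Set.Ioo (0 : ℝ) 1) (hεL : εL ∈ Set.Ioo (0 : ℝ) (1 / 2))
    (hL : εL * (Nat.card ↥Y : ℝ) ≤
      (Nat.card ↥{y : Fin n → ZMod 2 | y ∈ Y ∧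
        (Nat.card ↥{x : Fin n → ZMod 2 | x ∈ W ∧ (x, y) ∈ A} : ℝ) <
          (1 - εt) * α * δX * δD * (Nat.card ↥W : ℝ)} : ℝ)) :
    ∃ Y' : Set (Fin n → ZMod 2), Y' ⊆ Y ∧
      (Nat.card ↥Y : ℝ) / 2 ≤ (Nat.card ↥Y' : ℝ) ∧
      (1 + εt * εL / 2) * α * δX * ((Nat.card ↥Y' : ℝ) / (Nat.card ↥W : ℝ)) * δD *
          (Nat.card ↥W : ℝ) ^ 2 ≤
        (Nat.card ↥(A ∩ Container n X Y' D) : ℝ) := by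
  classical
  obtain ⟨hεt0, hεt1⟩ := hεt
  obtain ⟨hεL0, hεL1⟩ := hεL
  have hWne : Nonempty ↥W := ⟨⟨0, W.zero_mem⟩⟩
  have hw : (0:ℝ) < (Nat.card ↥W : ℝ) := by
    have : 0 < Nat.card ↥W := Nat.card_pos
    exact_mod_cast this
  have hwne : (Nat.card ↥W : ℝ) ≠ 0 := ne_of_gt hw
  have hYcard : Nat.card ↥Y = Y.toFinset.card := card_eq_toFinset_card' Y
  have hAcard : Nat.card ↥A = A.toFinset.card := card_eq_toFinset_card' A
  have hrow : ∀ y : Fin n → ZMod 2, Nat.card ↥{x : Fin n → ZMod 2 | x ∈ W ∧ (x, y) ∈ A}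
      = ({x : Fin n → ZMod 2 | x ∈ W ∧ (x, y) ∈ A}).toFinset.card :=
    fun y => card_eq_toFinset_card' _
  set AF := A.toFinset with hAF
  set YF := Y.toFinset with hYF
  set LF := YF.filter (fun y => (({x : Fin n → ZMod 2 | x ∈ W ∧ (x, y) ∈ A}).toFinset.card : ℝ)
      < (1 - εt) * α * δX * δD * (Nat.card ↥W : ℝ)) with hLF
  have hyR : (0:ℝ) < (YF.card : ℝ) := by
    have : 0 < YF.card := Finset.card_pos.mpr (Set.toFinset_nonempty.mpr hYne)
    exact_mod_cast this
  -- translate hL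
  have hLtrans : εL * (YF.card : ℝ) ≤ (LF.card : ℝ) := by
    have hset : {y : Fin n → ZMod 2 | y ∈ Y ∧
        (Nat.card ↥{x : Fin n → ZMod 2 | x ∈ W ∧ (x, y) ∈ A} : ℝ) <
          (1 - εt) * α * δX * δD * (Nat.card ↥W : ℝ)}.toFinset = LF := by
      ext y
      rw [Set.mem_toFinset, hLF, Finset.mem_filter, hYF, Set.mem_toFinset]
      simp only [Set.mem_setOf_eq, hrow]
    have hcL := card_eq_toFinset_card' {y : Fin n → ZMod 2 | y ∈ Y ∧
        (Nat.card ↥{x : Fin n → ZMod 2 | x ∈ W ∧ (x, y) ∈ A} : ℝ) <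
          (1 - εt) * α * δX * δD * (Nat.card ↥W : ℝ)}
    rw [hcL, hset] at hL
    rw [hYcard] at hL
    exact hL
  -- fiber counting
  have fiber : ∀ y : Fin n → ZMod 2, (AF.filter fun p => p.2 = y).card
      = ({x : Fin n → ZMod 2 | x ∈ W ∧ (x, y) ∈ A}).toFinset.card := by
    intro y
    refine Finset.card_bij' (fun p _ => p.1) (fun x _ => (x, y)) ?_ ?_ ?_ ?_
    · intro p hp
      simp only [Finset.mem_filter, hAF, Set.mem_toFinset] at hp
      simp only [Set.mem_toFinset, Set.mem_setOf_eq]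
      refine ⟨hXW (hA hp.1).1, ?_⟩
      rw [← hp.2]; exact hp.1
    · intro x hx
      rw [Set.mem_toFinset, Set.mem_setOf_eq] at hx
      rw [Finset.mem_filter]
      exact ⟨Set.mem_toFinset.mpr hx.2, rfl⟩
    · intro p hp
      simp only [Finset.mem_filter] at hp
      obtain ⟨p1, p2⟩ := p
      have h2 : p2 = y := hp.2
      simp only [h2]
    · intro x hx; rfl
  have sumcard : ∀ T : Finset (Fin n → ZMod 2),
      (AF.filter fun p => p.2 ∈ T).card
        = ∑ y ∈ T, ({x : Fin n → ZMod 2 | x ∈ W ∧ (x, y) ∈ A}).toFinset.card := by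
    intro T
    rw [Finset.card_eq_sum_card_fiberwise (f := Prod.snd) (t := T) (s := AF.filter fun p => p.2 ∈ T)
      (fun p hp => (Finset.mem_filter.mp hp).2)]
    refine Finset.sum_congr rfl fun y hy => ?_
    rw [← fiber y]
    congr 1
    ext p
    simp only [Finset.mem_filter]
    constructor
    · rintro ⟨⟨h1, _⟩, h2⟩; exact ⟨h1, h2⟩
    · rintro ⟨h1, h2⟩; exact ⟨⟨h1, by rw [h2]; exact hy⟩, h2⟩
  have hAtot : AF.card = ∑ y ∈ YF, ({x : Fin n → ZMod 2 | x ∈ W ∧ (x, y) ∈ A}).toFinset.card := by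
    rw [← sumcard YF]
    congr 1
    rw [Finset.filter_true_of_mem]
    intro p hp
    simp only [hAF, Set.mem_toFinset] at hp
    simp only [hYF, Set.mem_toFinset]
    exact (hA hp).2.1
  -- |A| in real terms
  have e1 : (AF.card : ℝ) = α * δX * δD * (YF.card : ℝ) * (Nat.card ↥W : ℝ) := by
    have : (AF.card : ℝ) = (Nat.card ↥A : ℝ) := by rw [hAcard]
    rw [this, hα, hδY, hYcard]
    field_simp
  have hc0 : (0:ℝ) ≤ α * δX * δD := by
    nlinarith [e1, (by positivity : (0:ℝ) ≤ (AF.card : ℝ)), mul_pos hyR hw]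
  -- the main construction, given a suitable finset of sparse rows to remove
  have main : ∀ L' : Finset (Fin n → ZMod 2), L' ⊆ LF →
      (L'.card : ℝ) ≤ (YF.card : ℝ) / 2 →
      εL * (YF.card : ℝ) ≤ (2 + εL) * (L'.card : ℝ) →
      ∃ Y' : Set (Fin n → ZMod 2), Y' ⊆ Y ∧
        (Nat.card ↥Y : ℝ) / 2 ≤ (Nat.card ↥Y' : ℝ) ∧
        (1 + εt * εL / 2) * α * δX * ((Nat.card ↥Y' : ℝ) / (Nat.card ↥W : ℝ)) * δD *
            (Nat.card ↥W : ℝ) ^ 2 ≤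
          (Nat.card ↥(A ∩ Container n X Y' D) : ℝ) := by
    intro L' hsubLF hhalf hkey
    have hsubYF : L' ⊆ YF := hsubLF.trans (Finset.filter_subset _ _)
    have hsubY : ↑L' ⊆ Y := by
      intro y hy
      have := hsubYF hy
      simpa only [hYF, Set.mem_toFinset] using this
    have hlecard : L'.card ≤ YF.card := Finset.card_le_card hsubYF
    refine ⟨Y \ ↑L', Set.diff_subset, ?_, ?_⟩
    · -- cardinality lower bound
      have hY' : Nat.card ↥(Y \ (↑L' : Set (Fin n → ZMod 2))) = YF.card - L'.card := by
        have hc := card_eq_toFinset_card' (Y \ (↑L' : Set (Fin n → ZMod 2)))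
        rw [hc]
        have : (Y \ (↑L' : Set (Fin n → ZMod 2))).toFinset = YF \ L' := by
          ext y
          simp [Set.mem_toFinset, hYF]
        rw [this, Finset.card_sdiff_of_subset hsubYF]
      rw [hY', hYcard, Nat.cast_sub hlecard]
      linarith
    · -- density increment
      have hY' : Nat.card ↥(Y \ (↑L' : Set (Fin n → ZMod 2))) = YF.card - L'.card := by
        have hc := card_eq_toFinset_card' (Y \ (↑L' : Set (Fin n → ZMod 2)))
        rw [hc]
        have : (Y \ (↑L' : Set (Fin n → ZMod 2))).toFinset = YF \ L' := by
          ext y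
          simp [Set.mem_toFinset, hYF]
        rw [this, Finset.card_sdiff_of_subset hsubYF]
      have hint : (A ∩ Container n X (Y \ (↑L' : Set (Fin n → ZMod 2))) D).toFinset
          = AF.filter (fun p => p.2 ∉ L') := by
        ext p
        simp only [Set.mem_toFinset, Set.mem_inter_iff, Container, Set.mem_setOf_eq,
          Set.mem_diff, Finset.mem_filter, Finset.mem_coe, hAF]
        constructor
        · rintro ⟨hpA, _, ⟨_, h⟩, _⟩; exact ⟨hpA, h⟩
        · rintro ⟨hpA, h⟩
          have h2 := hA hpA
          exact ⟨hpA, h2.1, ⟨h2.2.1, h⟩, h2.2.2⟩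
      have hcards : ((AF.filter (fun p => p.2 ∉ L')).card : ℝ)
          = (AF.card : ℝ) - ((AF.filter (fun p => p.2 ∈ L')).card : ℝ) := by
        have h := Finset.card_filter_add_card_filter_not (s := AF)
          (p := fun p => p.2 ∈ L')
        have h2 : ((AF.filter (fun p => p.2 ∈ L')).card : ℝ)
            + ((AF.filter (fun p => p.2 ∉ L')).card : ℝ) = (AF.card : ℝ) := by
          exact_mod_cast congrArg (fun k : ℕ => (k : ℝ)) h
        linarith
      have hsum : ((AF.filter fun p => p.2 ∈ L').card : ℝ)
          ≤ (1 - εt) * (α * δX * δD) * (L'.card : ℝ) * (Nat.card ↥W : ℝ) := by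
        rw [sumcard L']
        push_cast
        calc ∑ y ∈ L', (({x : Fin n → ZMod 2 | x ∈ W ∧ (x, y) ∈ A}).toFinset.card : ℝ)
            ≤ ∑ _y ∈ L', (1 - εt) * α * δX * δD * (Nat.card ↥W : ℝ) := by
              refine Finset.sum_le_sum fun y hy => ?_
              have := hsubLF hy
              rw [hLF, Finset.mem_filter] at this
              exact le_of_lt this.2
          _ = (1 - εt) * (α * δX * δD) * (L'.card : ℝ) * (Nat.card ↥W : ℝ) := by
              rw [Finset.sum_const, nsmul_eq_mul]; ring
      have hcardA' := card_eq_toFinset_card' (A ∩ Container n X (Y \ (↑L' : Set (Fin n → ZMod 2))) D)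
      rw [hcardA', hint, hY', Nat.cast_sub hlecard, hcards]
      have hkey2 : (0:ℝ) ≤ εt * ((α * δX * δD) * (Nat.card ↥W : ℝ)
          * ((2 + εL) * (L'.card : ℝ) - εL * (YF.card : ℝ))) :=
        mul_nonneg hεt0.le (mul_nonneg (mul_nonneg hc0 hw.le) (by linarith))
      have egoal : (1 + εt * εL / 2) * α * δX
            * (((YF.card : ℝ) - (L'.card : ℝ)) / (Nat.card ↥W : ℝ)) * δD
            * (Nat.card ↥W : ℝ) ^ 2
          = (1 + εt * εL / 2) * (α * δX * δD) * ((YF.card : ℝ) - (L'.card : ℝ))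
            * (Nat.card ↥W : ℝ) := by
        field_simp
      rw [egoal]
      linarith [hkey2, hsum, e1]
  by_cases hcase : 2 * LF.card ≤ YF.card
  · refine main LF le_rfl ?_ ?_
    · have : ((2 * LF.card : ℕ) : ℝ) ≤ (YF.card : ℝ) := by exact_mod_cast hcase
      push_cast at this
      linarith
    · nlinarith [hLtrans, (by positivity : (0:ℝ) ≤ (LF.card : ℝ)), hεL0]
  · push_neg at hcase
    have hLFle : LF.card ≤ YF.card := Finset.card_le_card (Finset.filter_subset _ _)
    have hyc1 : 1 ≤ YF.card := Finset.card_pos.mpr (Set.toFinset_nonempty.mpr hYne)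
    by_cases h1 : YF.card = 1
    · exfalso
      have hLF1 : LF = YF := by
        apply Finset.eq_of_subset_of_card_le (Finset.filter_subset _ _)
        rw [← hLF]
        omega
      obtain ⟨y, hy⟩ := Finset.card_eq_one.mp h1
      have hyLF : y ∈ LF := by rw [hLF1, hy]; exact Finset.mem_singleton_self y
      have hbound : (({x : Fin n → ZMod 2 | x ∈ W ∧ (x, y) ∈ A}).toFinset.card : ℝ)
          < (1 - εt) * α * δX * δD * (Nat.card ↥W : ℝ) := by
        rw [hLF, Finset.mem_filter] at hyLF
        exact hyLF.2
      have hAeq : AF.card = ({x : Fin n → ZMod 2 | x ∈ W ∧ (x, y) ∈ A}).toFinset.card := by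
        rw [hAtot, hy, Finset.sum_singleton]
      have e1' : (AF.card : ℝ) = α * δX * δD * (Nat.card ↥W : ℝ) := by
        rw [e1, h1]; push_cast; ring
      rw [hAeq] at e1'
      nlinarith [mul_nonneg (mul_nonneg hεt0.le hc0) hw.le]
    · have hyc2 : 2 ≤ YF.card := by omega
      obtain ⟨L', hL'sub, hL'card⟩ := Finset.exists_subset_card_eq
        (show YF.card / 2 ≤ LF.card by omega)
      refine main L' hL'sub ?_ ?_
      · rw [hL'card]
        have h := Nat.cast_div_le (α := ℝ) (m := YF.card) (n := 2)
        simpa using h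
      · have hl2 : ((YF.card : ℝ) - 1) / 2 ≤ (L'.card : ℝ) := by
          have hn : YF.card - 1 ≤ 2 * (YF.card / 2) := by omega
          have hn' : ((YF.card : ℝ)) - 1 ≤ 2 * ((YF.card / 2 : ℕ) : ℝ) := by
            have := (Nat.cast_le (α := ℝ)).mpr hn
            push_cast [Nat.cast_sub hyc1] at this
            linarith
          rw [hL'card]
          linarith
        have hyR2 : (2:ℝ) ≤ (YF.card : ℝ) := by exact_mod_cast hyc2
        nlinarith [hl2, hyR2, hεL0, hεL1,
          mul_nonneg (by linarith : (0:ℝ) ≤ 1/2 - εL) (by linarith : (0:ℝ) ≤ (YF.card : ℝ) - 2)]
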